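/- Let θ ∈ {0,1/2}, and let ε be a complex number satisfying either Re ε > 0 and ε⁻¹ ∉ ℤ, or Re ε = 0 and Im ε > 0. Define h(r,m) = −m(1+εm)/(1+2ε(m+r)) and φ(m,n) = (1/24)(m³−m+(ε−ε⁻¹)m²)·δ_{m+n,0}. Suppose σ: (ℤ+θ)×(ℤ+θ) → ℂ satisfies σ(r,s) + σ(s,r) = (1/12)(4r²−1)δ_{r+s,0} and 2φ(r+s,m) = h(s,m)σ(r,m+s) + h(r,m)σ(s,m+r) for all m ∈ ℤ and r,s ∈ ℤ+θ. Then σ(s,−s) = (1/24)(4s²−1+2(ε−ε⁻¹)s) for every s ∈ ℤ+θ. -/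

import Mathlib

/-- membership in ℤ + θ -/
def InZT (θ x : ℂ) : Prop := ∃ k : ℤ, x = (k : ℂ) + θ

/-- h(r,m) = −m(1+εm)/(1+2ε(m+r)) -/
noncomputable def vh (ε r m : ℂ) : ℂ := -m * (1 + ε * m) / (1 + 2 * ε * (m + r))

/-- φ(m,n) = (1/24)(m³−m+(ε−ε⁻¹)m²)δ_{m+n,0} -/
noncomputable def vphi (ε m n : ℂ) : ℂ :=
  (1 / 24) * (m ^ 3 - m + (ε - ε⁻¹) * m ^ 2) * (if m + n = 0 then 1 else 0)

/-- if σ satisfies the σ-part of equation (4.7) and equation (4.12)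
of the paper with the explicit h and φ, then
σ(s,−s) = (1/24)(4s²−1+2(ε−ε⁻¹)s) for every s ∈ ℤ+θ. -/
theorem sigma_diagonal_value (θ ε : ℂ) (hθ : θ = 0 ∨ θ = 1 / 2)
    (hε : (0 < ε.re ∧ ∀ k : ℤ, ε⁻¹ ≠ (k : ℂ)) ∨ (ε.re = 0 ∧ 0 < ε.im))
    (σ : ℂ → ℂ → ℂ)
    (hσ1 : ∀ r s : ℂ, InZT θ r → InZT θ s →
      σ r s + σ s r = (1 / 12) * (4 * r ^ 2 - 1) * (if r + s = 0 then 1 else 0))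
    (hσ2 : ∀ (m : ℤ) (r s : ℂ), InZT θ r → InZT θ s →
      2 * vphi ε (r + s) m
        = vh ε s m * σ r ((m : ℂ) + s) + vh ε r m * σ s ((m : ℂ) + r)) :
    ∀ s : ℂ, InZT θ s →
      σ s (-s) = (1 / 24) * (4 * s ^ 2 - 1 + 2 * (ε - ε⁻¹) * s) := by
  intro s hs
  obtain ⟨k, hk⟩ := hs
  have hε0 : ε ≠ 0 := by
    rcases hε with ⟨h1, _⟩ | ⟨h1, h2⟩
    · intro e; rw [e] at h1; simp at h1
    · intro e; rw [e] at h2; simp at h2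
  by_cases hs0 : s = 0
  · subst hs0
    have h1 := hσ1 0 0 ⟨k, hk⟩ ⟨k, hk⟩
    norm_num at h1
    rw [neg_zero]
    linear_combination h1 / 2
  · obtain ⟨m, hm⟩ : ∃ m : ℤ, (m : ℂ) = -(2 * s) := by
      rcases hθ with h | h
      · exact ⟨-(2 * k), by push_cast [hk, h]; ring⟩
      · exact ⟨-(2 * k + 1), by push_cast [hk, h]; ring⟩
    have hden : (1 : ℂ) - 2 * ε * s ≠ 0 := by
      intro h
      have hmul : ε * (2 * s) = 1 := by linear_combination -h
      have h2s : ((-m : ℤ) : ℂ) = 2 * s := by push_cast [hm]; ring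
      have hinv : ε⁻¹ = ((-m : ℤ) : ℂ) :=
        (inv_eq_of_mul_eq_one_right hmul).trans h2s.symm
      rcases hε with ⟨_, h2⟩ | ⟨h1, h2⟩
      · exact h2 (-m) hinv
      · have him : (ε⁻¹).im = 0 := by rw [hinv]; simp
        rw [Complex.inv_im] at him
        have hns : 0 < Complex.normSq ε := Complex.normSq_pos.mpr hε0
        have : ε.im = 0 := by
          field_simp at him
          linear_combination -him
        linarith
    have key := hσ2 m s s ⟨k, hk⟩ ⟨k, hk⟩
    have hms : (m : ℂ) + s = -s := by rw [hm]; ring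
    rw [hms] at key
    have hvh : vh ε s m = 2 * s := by
      unfold vh
      rw [hm]
      have hd : 1 + 2 * ε * (-(2 * s) + s) = 1 - 2 * ε * s := by ring
      rw [hd, div_eq_iff hden]
      ring
    have hphi : vphi ε (s + s) m
        = (1 / 24) * ((2 * s) ^ 3 - 2 * s + (ε - ε⁻¹) * (2 * s) ^ 2) := by
      unfold vphi
      have hc : s + s + (m : ℂ) = 0 := by rw [hm]; ring
      rw [if_pos hc]
      ring
    rw [hphi, hvh] at key
    have h4 : (4 : ℂ) * s ≠ 0 := by
      simp [hs0]
    have goal' : 4 * s * σ s (-s)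
        = 4 * s * ((1 / 24) * (4 * s ^ 2 - 1 + 2 * (ε - ε⁻¹) * s)) := by
      linear_combination -key
    exact mul_left_cancel₀ h4 goal'
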